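/- Let p ≥ 2 be an integer, ε > 0, A > 0, and let δ : ℕ → ℝ be a sequence with δ_k ≥ 0 for all k which satisfies, for every k ≥ 0, δ_{k+1} ≤ δ_k − ((p−1)/p) * (ε δ_k^p / A)^{1/(p−1)}. Then for all k ≥ 1: δ_k ≤ p^{p−1} A / (ε k^{p−1}). -/

import Mathlib

open Real

/-- Arithmetic lemma converting the per-step residual decrease of
the `p`-th order gradient method into an `O(1/(ε k^{p−1}))` convergence rate: if
`δ_k ≥ 0` and `δ_{k+1} ≤ δ_k − ((p−1)/p) (ε δ_k^p / A)^{1/(p−1)}` for all `k`, then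
`δ_k ≤ p^{p−1} A / (ε k^{p−1})` for `k ≥ 1`. -/
theorem residual_recursion_rate
    (p : ℕ) (hp : 2 ≤ p) (ε A : ℝ) (hε : 0 < ε) (hA : 0 < A)
    (δ : ℕ → ℝ) (hδ : ∀ k, 0 ≤ δ k)
    (hrec : ∀ k : ℕ, δ (k + 1) ≤
      δ k - (((p : ℝ) - 1) / (p : ℝ)) * (ε * δ k ^ p / A) ^ (1 / ((p : ℝ) - 1))) :
    ∀ k : ℕ, 1 ≤ k → δ k ≤ (p : ℝ) ^ (p - 1) * A / (ε * (k : ℝ) ^ (p - 1)) := by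
  have hp1 : (1:ℕ) ≤ p := by omega
  have hpR : (2:ℝ) ≤ (p:ℝ) := by exact_mod_cast hp
  have hpP : (0:ℝ) < (p:ℝ) := by linarith
  set q : ℝ := (p:ℝ) - 1 with hq_def
  have hq1 : 1 ≤ q := by rw [hq_def]; linarith
  have hq0 : 0 < q := by linarith
  set r : ℝ := 1 / q with hr_def
  have hr0 : 0 < r := by positivity
  have hr1 : r ≤ 1 := by rw [hr_def, div_le_one hq0]; linarith
  have hrq : r * q = 1 := by rw [hr_def]; field_simp
  have hqcast : ((p-1:ℕ):ℝ) = q := by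
    rw [Nat.cast_sub hp1, hq_def]; norm_num
  have hEA : (0:ℝ) < ε / A := by positivity
  set c : ℝ := (1/(p:ℝ)) * (ε/A) ^ r with hc_def
  have hc : 0 < c := by
    rw [hc_def]
    have := Real.rpow_pos_of_pos hEA r
    positivity
  -- the subtracted term is nonnegative, so δ is nonincreasing
  have hdec : ∀ k, δ (k+1) ≤ δ k := by
    intro k
    have h1 : (0:ℝ) ≤ (ε * δ k ^ p / A) ^ r :=
      Real.rpow_nonneg (by have := hδ k; positivity) r
    have h2 : (0:ℝ) ≤ q / p := by positivity
    nlinarith [hrec k]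
  -- key step: energy increase
  have key : ∀ k, 0 < δ (k+1) → δ k ^ (-r) + c ≤ δ (k+1) ^ (-r) := by
    intro k hd'
    have hd : 0 < δ k := lt_of_lt_of_le hd' (hdec k)
    set d := δ k with hd_def
    set t : ℝ := (ε/A) ^ r * d ^ r with ht_def
    have ht0 : 0 ≤ t := by
      have := Real.rpow_nonneg hEA.le r
      have := Real.rpow_nonneg hd.le r
      rw [ht_def]; positivity
    have hX : (ε * d ^ p / A) ^ r = d * t := by
      rw [show ε * d ^ p / A = (ε/A) * d ^ p by ring,
        Real.mul_rpow hEA.le (by positivity),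
        ← Real.rpow_natCast d p, ← Real.rpow_mul hd.le,
        show (p:ℝ) * r = 1 + r by rw [hr_def]; field_simp; rw [hq_def]; ring,
        Real.rpow_add hd, Real.rpow_one, ht_def]
      ring
    have hstep : δ (k+1) ≤ d * (1 - (q/p) * t) := by
      have h := hrec k
      rw [hX] at h
      refine h.trans (le_of_eq (by ring))
    have h1t : 0 < 1 - (q/p) * t := by
      have h := hd'.trans_le hstep
      by_contra hcon
      push_neg at hcon
      nlinarith [mul_nonpos_of_nonneg_of_nonpos hd.le hcon]
    -- Bernoulli
    have hB : (1 - (q/p) * t) ^ r ≤ 1 - (1/p) * t := by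
      have h := rpow_one_add_le_one_add_mul_self
        (show (-1:ℝ) ≤ -((q/p) * t) by linarith) hr0.le hr1
      have hrp : r * (q/p) = 1/p := by
        rw [hr_def]; field_simp
      calc (1 - (q/p) * t) ^ r = (1 + -((q/p) * t)) ^ r := by ring_nf
        _ ≤ 1 + r * -((q/p) * t) := h
        _ = 1 - (1/p) * t := by linear_combination -t * hrp
    have hy : 0 < (1 - (q/p) * t) ^ r := Real.rpow_pos_of_pos h1t r
    have hinv : 1 + (1/p) * t ≤ (1 - (q/p) * t) ^ (-r) := by
      have hp0 : (0:ℝ) ≤ 1 + (1/p) * t := by positivity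
      have h2 : (1 + (1/p) * t) * ((1 - (q/p) * t) ^ r) ≤ 1 := by
        have h3 := mul_le_mul_of_nonneg_left hB hp0
        nlinarith [sq_nonneg ((1/p) * t)]
      rw [Real.rpow_neg h1t.le]
      calc 1 + (1/p) * t
          = (1 + (1/p) * t) * ((1 - (q/p) * t) ^ r) * ((1 - (q/p) * t) ^ r)⁻¹ := by
            rw [mul_assoc, mul_inv_cancel₀ hy.ne', mul_one]
        _ ≤ 1 * ((1 - (q/p) * t) ^ r)⁻¹ :=
            mul_le_mul_of_nonneg_right h2 (inv_nonneg.mpr hy.le)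
        _ = ((1 - (q/p) * t) ^ r)⁻¹ := one_mul _
    have hmono : (d * (1 - (q/p) * t)) ^ (-r) ≤ δ (k+1) ^ (-r) :=
      Real.rpow_le_rpow_of_nonpos hd' hstep (neg_nonpos.mpr hr0.le)
    have hsplit : (d * (1 - (q/p) * t)) ^ (-r) = d ^ (-r) * (1 - (q/p) * t) ^ (-r) :=
      Real.mul_rpow hd.le h1t.le
    have hdd : d ^ (-r) * d ^ r = 1 := by
      rw [← Real.rpow_add hd]; simp
    have hdr : 0 ≤ d ^ (-r) := Real.rpow_nonneg hd.le _
    have hfin : d ^ (-r) + c ≤ d ^ (-r) * (1 - (q/p) * t) ^ (-r) := by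
      have h4 := mul_le_mul_of_nonneg_left hinv hdr
      have h5 : d ^ (-r) * (1 + (1/p) * t) = d ^ (-r) + c := by
        rw [ht_def, hc_def]
        linear_combination (1/(p:ℝ)) * (ε/A) ^ r * hdd
      linarith
    calc d ^ (-r) + c ≤ d ^ (-r) * (1 - (q/p) * t) ^ (-r) := hfin
      _ = (d * (1 - (q/p) * t)) ^ (-r) := hsplit.symm
      _ ≤ δ (k+1) ^ (-r) := hmono
  -- main induction
  have main : ∀ k, 0 < δ k → (k:ℝ) * c ≤ δ k ^ (-r) := by
    intro k
    induction k with
    | zero =>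
      intro _
      simpa using Real.rpow_nonneg (hδ 0) (-r)
    | succ n ih =>
      intro h
      have hdn : 0 < δ n := lt_of_lt_of_le h (hdec n)
      have h1 := ih hdn
      have h2 := key n h
      push_cast
      linarith
  -- conclude
  intro k hk
  rcases (hδ k).eq_or_lt with h0 | h0
  · rw [← h0]
    positivity
  · have hm := main k h0
    have hk0 : (0:ℝ) < (k:ℝ) := by exact_mod_cast hk
    have hkc : 0 < (k:ℝ) * c := by positivity
    have h3 : (δ k ^ (-r)) ^ (-q) ≤ ((k:ℝ) * c) ^ (-q) :=
      Real.rpow_le_rpow_of_nonpos hkc hm (by linarith)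
    have hL : (δ k ^ (-r)) ^ (-q) = δ k := by
      rw [← Real.rpow_mul h0.le, show -r * -q = 1 by linear_combination hrq,
        Real.rpow_one]
    have hR : ((k:ℝ) * c) ^ (-q) = (p:ℝ) ^ (p-1) * A / (ε * (k:ℝ) ^ (p-1)) := by
      rw [show -q = -(((p-1:ℕ)):ℝ) by rw [hqcast], Real.rpow_neg hkc.le,
        Real.rpow_natCast]
      have hcp : c ^ (p-1) = (1/(p:ℝ)) ^ (p-1) * (ε/A) := by
        rw [hc_def, mul_pow]
        congr 1
        rw [← Real.rpow_natCast ((ε/A) ^ r) (p-1), ← Real.rpow_mul hEA.le,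
          show r * ((p-1:ℕ):ℝ) = 1 by rw [hqcast]; exact hrq, Real.rpow_one]
      rw [mul_pow, hcp]
      have hkp : ((k:ℝ)) ^ (p-1) ≠ 0 := by positivity
      have hpp : ((p:ℝ)) ^ (p-1) ≠ 0 := by positivity
      field_simp [hε.ne', hA.ne']
      ring_nf
      rw [← mul_pow, mul_inv_cancel₀ hpP.ne', one_pow]
    rw [hL, hR] at h3
    exact h3
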